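/- Let X = Σ_{i∈V} 1(x_i = black) be the number of black variables and, for a real threshold x > 0, let E_x denote the event {X > x}. Then E_{x/2} testifies risk Pr(E_{x/2}) for E_x: one has E_x ⊆ E_{x/2}, and for every partial assignment ψ ∈ Respect(E_{x/2}), Pr(E_x | ψ) ≤ Pr(E_{x/2}). -/

import Mathlib

open Finset

namespace LLLRisk

variable {V : Type*} [Fintype V] [DecidableEq V]

/-- The two colors: `black = true`, `white = false`. -/
abbrev Col := Bool

def black : Col := true
def white : Col := false

/-- Probability weight of value `b` for a variable that is black with probability `q`. -/
def wgt (q : ℝ) (b : Col) : ℝ := if b = black then q else 1 - q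

/-- A partial assignment `ψ` agrees with a full assignment `φ` if they coincide on
all variables set by `ψ`. -/
def Agrees (ψ : V → Option Col) (φ : V → Col) : Prop :=
  ∀ i : V, ∀ b : Col, ψ i = some b → φ i = b

open Classical in
/-- `condPr q E ψ` : the probability that the random full assignment (variable `i`
being black with probability `q i`, independently) lies in `E`, conditioned on
agreeing with the partial assignment `ψ`; the randomness is overA `ψ⁻¹(⊥)`. -/
noncomputable def condPr (q : V → ℝ) (E : Set (V → Col)) (ψ : V → Option Col) : ℝ :=
  ∑ φ : V → Col,
    if Agrees ψ φ ∧ φ ∈ E then ∏ i : V, (if ψ i = none then wgt (q i) (φ i) else 1) else 0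

/-- Unconditional probability of an event. -/
noncomputable def pr (q : V → ℝ) (E : Set (V → Col)) : ℝ :=
  condPr q E (fun _ => none)

/-- `Respects vbl E' ψ` : `ψ` is a retraction of some full assignment `φ ∉ E'` such
that in addition either all variables of `vbl` that are white under `φ` are
retracted, or no variable of `vbl` that is black under `φ` is retracted. -/
def Respects (vbl : Finset V) (E' : Set (V → Col)) (ψ : V → Option Col) : Prop :=
  ∃ φ : V → Col, φ ∉ E' ∧ Agrees ψ φ ∧
    ((∀ i ∈ vbl, φ i = white → ψ i = none) ∨ (∀ i ∈ vbl, φ i = black → ψ i ≠ none))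

/-- The event `E'` (with variable set `vbl'`) testifies risk `x` for the event `E`. -/
def Testifies (q : V → ℝ) (vbl' : Finset V) (E E' : Set (V → Col)) (x : ℝ) : Prop :=
  E ⊆ E' ∧ pr q E' ≤ x ∧
    ∀ ψ : V → Option Col, Respects vbl' E' ψ → condPr q E ψ ≤ x

/-- The event `E` depends only on the coordinates in `vbl`. -/
def DependsOn (E : Set (V → Col)) (vbl : Finset V) : Prop :=
  ∀ φ φ' : V → Col, (∀ i ∈ vbl, φ i = φ' i) → (φ ∈ E ↔ φ' ∈ E)

/-- Rank realizing the order `black < ⊥ < white` on `Option Col`. -/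
def rank : Option Col → ℕ
  | some b => if b = black then 0 else 2
  | none => 1

/-- `E` is monotone increasing (w.r.t. the coordinates in `vbl`):
`Pr(E ∣ ψ) ≤ Pr(E ∣ φ)` whenever `ψ i ≤ φ i` for all `i ∈ vbl`,
where `black < ⊥ < white`. -/
def MonotoneIncrOn (q : V → ℝ) (E : Set (V → Col)) (vbl : Finset V) : Prop :=
  ∀ ψ φ : V → Option Col, (∀ i ∈ vbl, rank (ψ i) ≤ rank (φ i)) →
    condPr q E ψ ≤ condPr q E φ

end LLLRisk

namespace LLLRisk

/-- Number of black variables in a full assignment. -/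
def numBlack {V : Type*} [Fintype V] [DecidableEq V] (φ : V → Col) : ℕ :=
  (Finset.univ.filter fun i => φ i = black).card

section Aux

variable {V : Type*} [Fintype V] [DecidableEq V]

/-- Override a full assignment by a partial one. -/
def overA (ψ : V → Option Col) (φ : V → Col) : V → Col := fun i => (ψ i).getD (φ i)

lemma agrees_over (ψ : V → Option Col) (φ : V → Col) : Agrees ψ (overA ψ φ) := by
  intro i b h; simp [overA, h]

lemma wgt_sum (r : ℝ) : ∑ b : Col, wgt r b = 1 := by
  simp [wgt, black]

lemma wgt_nonneg {r : ℝ} (hr : r ∈ Set.Icc (0:ℝ) 1) (b : Col) : 0 ≤ wgt r b := by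
  rcases hr with ⟨h0, h1⟩
  unfold wgt; split <;> linarith

open Classical in
lemma condPr_eq (q : V → ℝ) (E : Set (V → Col)) (ψ : V → Option Col) :
    condPr q E ψ =
      ∑ φ : V → Col, if overA ψ φ ∈ E then ∏ i : V, wgt (q i) (φ i) else 0 := by
  classical
  rw [← Finset.sum_fiberwise_of_maps_to (g := overA ψ) (t := Finset.univ)
      (fun x _ => Finset.mem_univ _)
      (fun φ => if overA ψ φ ∈ E then ∏ i : V, wgt (q i) (φ i) else 0)]
  unfold condPr
  refine Finset.sum_congr rfl fun φ' _ => ?_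
  by_cases hA : Agrees ψ φ'
  · have hfib : (Finset.univ.filter fun φ : V → Col => overA ψ φ = φ') =
        Fintype.piFinset (fun i => if ψ i = none then ({φ' i} : Finset Col)
          else Finset.univ) := by
      ext φ
      simp only [Finset.mem_filter, Finset.mem_univ, true_and, Fintype.mem_piFinset,
        funext_iff]
      constructor
      · intro h i
        rcases hψ : ψ i with _ | b
        · have := h i; simp [overA, hψ] at this; simp [hψ, this]
        · simp [hψ]
      · intro h i
        rcases hψ : ψ i with _ | b
        · have := h i; simp [hψ] at this; simp [overA, hψ, this]
        · simp [overA, hψ, hA i b hψ]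
    rw [hfib]
    have hsum : ∑ φ ∈ Fintype.piFinset (fun i => if ψ i = none then ({φ' i} : Finset Col)
          else Finset.univ),
        (if overA ψ φ ∈ E then ∏ i : V, wgt (q i) (φ i) else 0) =
        ∑ φ ∈ Fintype.piFinset (fun i => if ψ i = none then ({φ' i} : Finset Col)
          else Finset.univ),
        (if φ' ∈ E then ∏ i : V, wgt (q i) (φ i) else 0) := by
      refine Finset.sum_congr rfl fun φ hφ => ?_
      have hover : overA ψ φ = φ' := by
        funext i
        rcases hψ : ψ i with _ | b
        · have := (Fintype.mem_piFinset.1 hφ) i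
          simp [hψ] at this; simp [overA, hψ, this]
        · simp [overA, hψ, hA i b hψ]
      rw [hover]
    rw [hsum]
    by_cases hE : φ' ∈ E
    · simp only [hE, if_true, hA, true_and]
      rw [← Finset.prod_univ_sum]
      refine Finset.prod_congr rfl fun i _ => ?_
      rcases hψ : ψ i with _ | b
      · simp [hψ]
      · simp [hψ, wgt, black]
    · simp [hE, hA]
  · have hfib : (Finset.univ.filter fun φ : V → Col => overA ψ φ = φ') = ∅ := by
      rw [Finset.filter_eq_empty_iff]
      intro φ _ h
      exact hA (h ▸ agrees_over ψ φ)
    simp [hfib, hA]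

lemma condPr_le_pr (q : V → ℝ) (hq : ∀ i, q i ∈ Set.Icc (0 : ℝ) 1)
    (E E2 : Set (V → Col)) (ψ : V → Option Col)
    (h : ∀ φ : V → Col, overA ψ φ ∈ E → φ ∈ E2) :
    condPr q E ψ ≤ pr q E2 := by
  classical
  have h2 : pr q E2 = ∑ φ : V → Col, if φ ∈ E2 then ∏ i : V, wgt (q i) (φ i) else 0 := by
    rw [pr, condPr_eq]
    refine Finset.sum_congr rfl fun φ _ => ?_
    have : overA (fun _ : V => (none : Option Col)) φ = φ := rfl
    rw [this]
  rw [condPr_eq, h2]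
  refine Finset.sum_le_sum fun φ _ => ?_
  have hnn : 0 ≤ ∏ i : V, wgt (q i) (φ i) :=
    Finset.prod_nonneg fun i _ => wgt_nonneg (hq i) _
  by_cases hE : overA ψ φ ∈ E
  · simp [hE, h φ hE]
  · simp only [hE, if_false]
    split <;> [exact hnn; exact le_refl 0]

end Aux

/-- For `X = Σ_i 1(x_i = black)` and a real threshold `x > 0`, the event
`E_{x/2} = {X > x/2}` testifies risk `Pr(E_{x/2})` for the event `E_x = {X > x}`:
`E_x ⊆ E_{x/2}` and `Pr(E_x ∣ ψ) ≤ Pr(E_{x/2})` for every `ψ ∈ Respect(E_{x/2})`. -/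
theorem threshold_risk {V : Type*} [Fintype V] [DecidableEq V]
    (q : V → ℝ) (hq : ∀ i, q i ∈ Set.Icc (0 : ℝ) 1)
    (x : ℝ) (hx : 0 < x) :
    Testifies q Finset.univ
      {φ : V → Col | x < (numBlack φ : ℝ)}
      {φ : V → Col | x / 2 < (numBlack φ : ℝ)}
      (pr q {φ : V → Col | x / 2 < (numBlack φ : ℝ)}) := by
  classical
  refine ⟨?_, le_refl _, ?_⟩
  · intro φ hφ
    simp only [Set.mem_setOf_eq] at hφ ⊢
    linarith
  · rintro ψ ⟨φ0, hφ0, hA0, -⟩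
    simp only [Set.mem_setOf_eq, not_lt] at hφ0
    refine condPr_le_pr q hq _ _ ψ fun φ hφ => ?_
    simp only [Set.mem_setOf_eq] at hφ ⊢
    -- the black variables of `over ψ φ` are among the fixed blacks and the blacks of `φ`
    have hsub : (Finset.univ.filter fun i => overA ψ φ i = black) ⊆
        (Finset.univ.filter fun i => ψ i = some black) ∪
        (Finset.univ.filter fun i => φ i = black) := by
      intro i hi
      simp only [Finset.mem_filter, Finset.mem_univ, true_and] at hi
      simp only [Finset.mem_union, Finset.mem_filter, Finset.mem_univ, true_and]
      rcases hψ : ψ i with _ | b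
      · right; simpa [overA, hψ] using hi
      · left; simp only [overA, hψ, Option.getD_some] at hi; rw [hi]
    have hk : (Finset.univ.filter fun i => ψ i = some black) ⊆
        (Finset.univ.filter fun i => φ0 i = black) := by
      intro i hi
      simp only [Finset.mem_filter, Finset.mem_univ, true_and] at hi ⊢
      exact hA0 i black hi
    have h1 : numBlack (overA ψ φ) ≤
        (Finset.univ.filter fun i => ψ i = some black).card + numBlack φ :=
      le_trans (Finset.card_le_card hsub) (Finset.card_union_le _ _)
    have h2 : (Finset.univ.filter fun i => ψ i = some black).card ≤ numBlack φ0 :=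
      Finset.card_le_card hk
    have h1' : (numBlack (overA ψ φ) : ℝ) ≤
        ((Finset.univ.filter fun i => ψ i = some black).card : ℝ) + numBlack φ := by
      exact_mod_cast h1
    have h2' : ((Finset.univ.filter fun i => ψ i = some black).card : ℝ) ≤ numBlack φ0 := by
      exact_mod_cast h2
    linarith

end LLLRisk
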